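/- Topological categories over Set correspond exactly to functors Set^op → InfL (the category of complete lattices and meet-preserving maps): every topological category induces such a functor via fibres and pullback maps, and conversely the Grothendieck construction of any functor F : Set^op → InfL is a topological category, where the initial lift of a structured source {f_i : X → p(X_i, A_i)} is ⋀_i F(f_i)(A_i), and these constructions are mutually inverse up to equivalence. -/

import Mathlib

/-- A (fibre-small) concrete category over `Set`, presented by its fibres and
hom-sets, which are subsets of the set of functions between the underlying sets
(faithfulness is built in). -/
structure ConcreteCat where
  Fib : Type → Type
  Hom : ∀ {X Y : Type}, Fib X → Fib Y → Set (X → Y)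
  id_mem : ∀ {X : Type} (A : Fib X), (id : X → X) ∈ Hom A A
  comp_mem : ∀ {X Y Z : Type} {A : Fib X} {B : Fib Y} {C : Fib Z}
      {f : X → Y} {g : Y → Z}, f ∈ Hom A B → g ∈ Hom B C → (g ∘ f) ∈ Hom A C

namespace ConcreteCat

/-- The fibre (pre)order: `A ≤ B` iff the identity is a morphism `A → B`. -/
def le (C : ConcreteCat) {X : Type} (A B : C.Fib X) : Prop :=
  (id : X → X) ∈ C.Hom A B

/-- `L` is an initial lift of the structured source `{f i : X → U (A i)}`. -/
def IsInitialLift (C : ConcreteCat) {X : Type} {ι : Type} {Y : ι → Type}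
    (f : ∀ i, X → Y i) (A : ∀ i, C.Fib (Y i)) (L : C.Fib X) : Prop :=
  ∀ (Z : Type) (B : C.Fib Z) (g : Z → X),
    g ∈ C.Hom B L ↔ ∀ i, (f i ∘ g) ∈ C.Hom B (A i)

/-- A topological category: every structured source has a unique initial lift. -/
def Topological (C : ConcreteCat) : Prop :=
  ∀ (X ι : Type) (Y : ι → Type) (f : ∀ i, X → Y i) (A : ∀ i, C.Fib (Y i)),
    ∃! L : C.Fib X, C.IsInitialLift f A L

end ConcreteCat

/-- The infimum of a subset with respect to an explicitly given complete
lattice structure. -/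
def sInf' {α : Type} (c : CompleteLattice α) (s : Set α) : α := letI := c; sInf s

/-- The order of an explicitly given complete lattice structure. -/
def le' {α : Type} (c : CompleteLattice α) (a b : α) : Prop := letI := c; a ≤ b

/-- A functor `Set^op → InfL`: a complete lattice of "structures" for each set,
with meet-preserving (hence monotone) transition maps along functions. -/
structure InfLFunctor where
  L : Type → Type
  lat : ∀ X : Type, CompleteLattice (L X)
  map : ∀ {X Y : Type}, (X → Y) → L Y → L X
  map_id : ∀ (X : Type) (a : L X), map (id : X → X) a = a
  map_comp : ∀ {X Y Z : Type} (f : X → Y) (g : Y → Z) (a : L Z),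
      map (g ∘ f) a = map f (map g a)
  map_sInf : ∀ {X Y : Type} (f : X → Y) (s : Set (L Y)),
      map f (sInf' (lat Y) s) = sInf' (lat X) (map f '' s)
  map_mono : ∀ {X Y : Type} (f : X → Y) (a b : L Y),
      le' (lat Y) a b → le' (lat X) (map f a) (map f b)

/-- The Grothendieck construction of a functor `Set^op → InfL`, as a concrete
category over `Set`: objects over `X` are elements of `F.L X`, and a function
`f` is a morphism `(X, A) → (Y, B)` iff `A ≤ F.map f B`. -/
def InfLFunctor.Groth (F : InfLFunctor) : ConcreteCat where
  Fib := F.L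
  Hom {X Y} A B := {f : X → Y | le' (F.lat X) A (F.map f B)}
  id_mem {X} A := by
    show le' (F.lat X) A (F.map id A)
    rw [F.map_id]
    letI := F.lat X
    exact le_refl A
  comp_mem {X Y Z} A B C f g hf hg := by
    show le' (F.lat X) A (F.map (g ∘ f) C)
    rw [F.map_comp]
    letI := F.lat X
    exact le_trans hf (F.map_mono f _ _ hg)

/-- Topological categories over `Set` correspond exactly to functors
`Set^op → InfL`.  (1) Every topological category has pullback maps `pb f`
given by initial lifts; these are functorial (`pb id = id`,
`pb (g ∘ f) = pb f ∘ pb g`), the fibres are (antisymmetric) complete preorders,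
pullbacks preserve arbitrary meets, and the hom-sets are recovered from this
data: `g ∈ Hom A B ↔ A ≤ pb g B`.  (2) Conversely, the Grothendieck
construction of any `F : Set^op → InfL` is a topological category, in which the
initial lift of a structured source `{f i : X → p (Y i, A i)}` is
`⋀ i, F.map (f i) (A i)`, and its fibre order agrees with the order of `F.L X`
(so the two constructions are mutually inverse up to equivalence). -/
theorem stmt2 :
    (∀ C : ConcreteCat, C.Topological →
      ∃ pb : ∀ {X Y : Type}, (X → Y) → C.Fib Y → C.Fib X,
        (∀ (X Y : Type) (f : X → Y) (B : C.Fib Y),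
          C.IsInitialLift (fun _ : Unit => f) (fun _ => B) (pb f B)) ∧
        (∀ (X : Type) (A B : C.Fib X), C.le A B → C.le B A → A = B) ∧
        (∀ (X : Type) (B : C.Fib X), pb (id : X → X) B = B) ∧
        (∀ (X Y Z : Type) (f : X → Y) (g : Y → Z) (B : C.Fib Z),
          pb (g ∘ f) B = pb f (pb g B)) ∧
        (∀ (X Y : Type) (f : X → Y) (ι : Type) (B : ι → C.Fib Y) (M : C.Fib Y),
          ((∀ i, C.le M (B i)) ∧ ∀ N, (∀ i, C.le N (B i)) → C.le N M) →
          ((∀ i, C.le (pb f M) (pb f (B i))) ∧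
            ∀ N, (∀ i, C.le N (pb f (B i))) → C.le N (pb f M))) ∧
        (∀ (X Y : Type) (A : C.Fib X) (B : C.Fib Y) (g : X → Y),
          g ∈ C.Hom A B ↔ C.le A (pb g B))) ∧
    (∀ F : InfLFunctor,
      F.Groth.Topological ∧
      (∀ (X ι : Type) (Y : ι → Type) (f : ∀ i, X → Y i) (A : ∀ i, F.L (Y i)),
        F.Groth.IsInitialLift f A
          (sInf' (F.lat X) (Set.range fun i => F.map (f i) (A i)))) ∧
      (∀ (X : Type) (a b : F.L X), F.Groth.le a b ↔ le' (F.lat X) a b)) := by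
  constructor
  · -- Part 1: topological categories give InfL functors
    intro C hC
    -- antisymmetry of the fibre order
    have antisymm : ∀ (X : Type) (A B : C.Fib X), C.le A B → C.le B A → A = B := by
      intro X A B hab hba
      obtain ⟨L, _, huniq⟩ := hC X Unit (fun _ => X) (fun _ => id) (fun _ => A)
      have hA : C.IsInitialLift (fun _ : Unit => (id : X → X)) (fun _ => A) A := by
        intro Z B' g
        exact ⟨fun h _ => h, fun h => h ()⟩
      have hB : C.IsInitialLift (fun _ : Unit => (id : X → X)) (fun _ => A) B := by
        intro Z B' g
        constructor
        · intro h _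
          exact C.comp_mem h hba
        · intro h
          have h2 := C.comp_mem (h ()) hab
          exact h2
      rw [huniq A hA, huniq B hB]
    choose pb hpb huniq using fun (X Y : Type) (f : X → Y) (B : C.Fib Y) =>
      hC X Unit (fun _ => Y) (fun _ => f) (fun _ => B)
    have key : ∀ (X Y Z : Type) (f : X → Y) (B : C.Fib Y) (B' : C.Fib Z) (g : Z → X),
        g ∈ C.Hom B' (pb X Y f B) ↔ (f ∘ g) ∈ C.Hom B' B := by
      intro X Y Z f B B' g
      rw [hpb X Y f B Z B' g]
      exact ⟨fun h => h (), fun h _ => h⟩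
    refine ⟨fun {X Y} => pb X Y, fun X Y f B => hpb X Y f B, antisymm, ?_, ?_, ?_, ?_⟩
    · -- pb id = id
      intro X B
      have hB : C.IsInitialLift (fun _ : Unit => (id : X → X)) (fun _ => B) B := by
        intro Z B' g
        exact ⟨fun h _ => h, fun h => h ()⟩
      exact (huniq X X id B B hB).symm
    · -- pb (g ∘ f) = pb f ∘ pb g
      intro X Y Z f g B
      have h : C.IsInitialLift (fun _ : Unit => g ∘ f) (fun _ => B)
          (pb X Y f (pb Y Z g B)) := by
        intro W B' h
        rw [key, key]
        exact ⟨fun h1 _ => h1, fun h1 => h1 ()⟩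
      exact (huniq X Z (g ∘ f) B _ h).symm
    · -- pb preserves meets
      intro X Y f ι B M hM
      obtain ⟨M', hM', _⟩ := hC Y ι (fun _ => Y) (fun _ => id) B
      -- M' is also a meet, hence M = M'
      have hMM' : M = M' := by
        apply antisymm
        · exact (hM' Y M id).2 (fun i => hM.1 i)
        · exact hM.2 M' ((hM' Y M' id).1 (C.id_mem M'))
      rw [hMM']
      have hfM : ∀ (Z : Type) (N : C.Fib Z) (g : Z → X),
          g ∈ C.Hom N (pb X Y f M') ↔ ∀ i, (f ∘ g) ∈ C.Hom N (B i) := by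
        intro Z N g
        rw [key]
        exact hM' Z N (f ∘ g)
      constructor
      · intro i
        have : ∀ j, (f ∘ id) ∈ C.Hom (pb X Y f M') (B j) :=
          (hfM X (pb X Y f M') id).1 (C.id_mem _)
        exact (key X Y X f (B i) (pb X Y f M') id).2 (this i)
      · intro N hN
        exact (hfM X N id).2 (fun i => (key X Y X f (B i) N id).1 (hN i))
    · -- Hom recovery
      intro X Y A B g
      exact (key X Y X g B A id).symm
  · -- Part 2: Grothendieck constructions are topological
    intro F
    have groth_le : ∀ (X : Type) (a b : F.L X), F.Groth.le a b ↔ le' (F.lat X) a b := by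
      intro X a b
      show le' (F.lat X) a (F.map id b) ↔ _
      rw [F.map_id]
    have hlift : ∀ (X ι : Type) (Y : ι → Type) (f : ∀ i, X → Y i) (A : ∀ i, F.L (Y i)),
        F.Groth.IsInitialLift f A
          (sInf' (F.lat X) (Set.range fun i => F.map (f i) (A i))) := by
      intro X ι Y f A Z B g
      change F.L Z at B
      show le' (F.lat Z) B (F.map g (sInf' (F.lat X) (Set.range fun i => F.map (f i) (A i)))) ↔
        ∀ i : ι, le' (F.lat Z) B (F.map (f i ∘ g) (A i))
      rw [F.map_sInf]
      have himg : F.map g '' Set.range (fun i : ι => F.map (f i) (A i))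
          = Set.range (fun i : ι => F.map (f i ∘ g) (A i)) := by
        have hfun : (F.map g ∘ fun i : ι => F.map (f i) (A i))
            = (fun i : ι => F.map (f i ∘ g) (A i)) := by
          funext i
          exact (F.map_comp g (f i) (A i)).symm
        rw [← Set.range_comp, hfun]
      rw [himg]
      letI : CompleteLattice (F.L Z) := F.lat Z
      show B ≤ sInf _ ↔ _
      rw [le_sInf_iff]
      simp only [Set.forall_mem_range]
      rfl
    refine ⟨fun X ι Y f A => ⟨_, hlift X ι Y f A, ?_⟩, hlift, groth_le⟩
    intro L hL
    letI : CompleteLattice (F.Groth.Fib X) := F.lat X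
    set L0 := sInf' (F.lat X) (Set.range fun i => F.map (f i) (A i)) with hL0
    have h1 : F.Groth.le L L0 :=
      (hlift X ι Y f A X L id).2 ((hL X L id).1 (F.Groth.id_mem L))
    have h2 : F.Groth.le L0 L :=
      (hL X L0 id).2 ((hlift X ι Y f A X L0 id).1 (F.Groth.id_mem L0))
    exact le_antisymm ((groth_le X L L0).1 h1) ((groth_le X L0 L).1 h2)
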